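/- Consider the Hedge algorithm over K actions with nonincreasing learning rates η_1 ≥ η_2 ≥ ⋯ > 0 and nonnegative losses ℓ_t(k) ≥ 0, where p_1 is uniform and p_t(i) ∝ exp(−η_t ∑_{s<t} ℓ_s(i)). Then ∑_{t=1}^T ∑_i p_t(i) ℓ_t(i) − min_k ∑_{t=1}^T ℓ_t(k) ≤ (ln K)/η_T + (1/2) ∑_{t=1}^T η_t ∑_i p_t(i) ℓ_t(i)². -/

import Mathlib

open Finset

/-- Hedge with time-varying learning rates and nonnegative losses: if
`η_1 ≥ η_2 ≥ ⋯ > 0` and `p_t(i) ∝ exp(−η_t ∑_{s<t} ℓ_s(i))` (so `p_1` is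
uniform), then for every comparator `k`,
`∑_{t=1}^T ∑_i p_t(i) ℓ_t(i) − ∑_{t=1}^T ℓ_t(k)
  ≤ (ln K)/η_T + (1/2) ∑_{t=1}^T η_t ∑_i p_t(i) ℓ_t(i)²`. -/

lemma aux_exp_quad (x : ℝ) (hx : 0 ≤ x) : Real.exp (-x) ≤ 1 - x + x^2/2 := by
  have hmono : MonotoneOn (fun y : ℝ => 1 - y + y^2/2 - Real.exp (-y)) (Set.Ici 0) := by
    have hder : ∀ y : ℝ, HasDerivAt (fun y : ℝ => 1 - y + y^2/2 - Real.exp (-y))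
        (-1 + y + Real.exp (-y)) y := by
      intro y
      have h1 : HasDerivAt (fun y : ℝ => Real.exp (-y)) (-Real.exp (-y)) y := by
        simpa [Function.comp_def] using (Real.hasDerivAt_exp (-y)).comp y (hasDerivAt_neg y)
      have h2 : HasDerivAt (fun y : ℝ => 1 - y + y^2/2) (-1 + y) y := by
        have : HasDerivAt (fun y : ℝ => y^2/2) y y := by
          simpa using ((hasDerivAt_pow 2 y).div_const 2)
        exact (((hasDerivAt_const y (1:ℝ)).sub (hasDerivAt_id y)).add this).congr_deriv (by ring)
      exact (h2.sub h1).congr_deriv (by ring)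
    apply monotoneOn_of_deriv_nonneg (convex_Ici 0)
    · exact (Continuous.continuousOn (by continuity))
    · intro y hy
      exact (hder y).differentiableAt.differentiableWithinAt
    · intro y hy
      rw [(hder y).deriv]
      nlinarith [Real.add_one_le_exp (-y)]
  have := hmono (Set.self_mem_Ici) (Set.mem_Ici.2 hx) hx
  simp at this
  linarith


noncomputable def psi (K : ℕ) (a : ℝ) (L : Fin K → ℝ) : ℝ :=
  (1/a) * Real.log ((∑ i : Fin K, Real.exp (-(a * L i))) / K)

lemma aux_psi_mono {K : ℕ} (hK : 1 ≤ K) (L : Fin K → ℝ) {a b : ℝ} (ha : 0 < a) (hab : a ≤ b) :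
    psi K a L ≤ psi K b L := by
  have hb : 0 < b := lt_of_lt_of_le ha hab
  have hKpos : (0:ℝ) < K := by exact_mod_cast hK
  haveI : Nonempty (Fin K) := Fin.pos_iff_nonempty.1 hK
  -- power mean: ∑ (1/K) * exp(-(a*L i)) ≤ (∑ (1/K) * exp(-(b*L i))) ^ (a/b)
  have hpm : ∑ i : Fin K, (1/(K:ℝ)) * Real.exp (-(a * L i))
      ≤ (∑ i : Fin K, (1/(K:ℝ)) * Real.exp (-(b * L i))) ^ ((a:ℝ)/b) := by
    have h := Real.arith_mean_le_rpow_mean (univ : Finset (Fin K))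
      (fun _ => (1/(K:ℝ))) (fun i => Real.exp (-(a * L i)))
      (fun i _ => by positivity) (by simp; field_simp) (fun i _ => (Real.exp_pos _).le)
      (p := b/a) ((one_le_div ha).2 hab)
    have hz : ∀ i : Fin K, (Real.exp (-(a * L i))) ^ ((b:ℝ)/a) = Real.exp (-(b * L i)) := by
      intro i
      rw [← Real.exp_log (Real.exp_pos (-(a * L i))) ]
      rw [← Real.exp_mul, Real.log_exp]
      ring_nf
      congr 1
      field_simp
    simp only [hz] at h
    have h2 : (1:ℝ)/(b/a) = a/b := by field_simp
    rw [h2] at h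
    exact h
  have hSa : (0:ℝ) < ∑ i : Fin K, Real.exp (-(a * L i)) :=
    Finset.sum_pos (fun i _ => Real.exp_pos _) univ_nonempty
  have hSb : (0:ℝ) < ∑ i : Fin K, Real.exp (-(b * L i)) :=
    Finset.sum_pos (fun i _ => Real.exp_pos _) univ_nonempty
  have hsum : ∀ c : ℝ, ∑ i : Fin K, (1/(K:ℝ)) * Real.exp (-(c * L i))
      = (∑ i : Fin K, Real.exp (-(c * L i))) / K := by
    intro c; rw [← Finset.mul_sum]; ring
  rw [hsum, hsum] at hpm
  have hposA : (0:ℝ) < (∑ i : Fin K, Real.exp (-(a * L i))) / K := by positivity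
  have hposB : (0:ℝ) < (∑ i : Fin K, Real.exp (-(b * L i))) / K := by positivity
  have hlog : Real.log ((∑ i : Fin K, Real.exp (-(a * L i))) / K)
      ≤ (a/b) * Real.log ((∑ i : Fin K, Real.exp (-(b * L i))) / K) := by
    have := Real.log_le_log hposA hpm
    rwa [Real.log_rpow hposB] at this
  unfold psi
  calc (1/a) * Real.log ((∑ i : Fin K, Real.exp (-(a * L i))) / K)
      ≤ (1/a) * ((a/b) * Real.log ((∑ i : Fin K, Real.exp (-(b * L i))) / K)) :=
        mul_le_mul_of_nonneg_left hlog (by positivity)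
    _ = (1/b) * Real.log ((∑ i : Fin K, Real.exp (-(b * L i))) / K) := by
        field_simp



lemma aux_round {K : ℕ} (hK : 1 ≤ K) {η : ℝ} (hη : 0 < η) (p ℓ : Fin K → ℝ)
    (hp0 : ∀ i, 0 ≤ p i) (hp1 : ∑ i, p i = 1) (hℓ : ∀ i, 0 ≤ ℓ i)
    (hS : 0 < ∑ i, p i * Real.exp (-(η * ℓ i))) :
    ∑ i, p i * ℓ i ≤ -(1/η) * Real.log (∑ i, p i * Real.exp (-(η * ℓ i)))
      + (η/2) * ∑ i, p i * ℓ i ^ 2 := by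
  set S := ∑ i, p i * Real.exp (-(η * ℓ i)) with hSdef
  have hbound : S ≤ 1 - η * ∑ i, p i * ℓ i + η^2/2 * ∑ i, p i * ℓ i ^ 2 := by
    have h1 : S ≤ ∑ i, p i * (1 - η * ℓ i + (η * ℓ i)^2/2) := by
      apply Finset.sum_le_sum
      intro i _
      exact mul_le_mul_of_nonneg_left (aux_exp_quad _ (mul_nonneg hη.le (hℓ i))) (hp0 i)
    calc S ≤ ∑ i, p i * (1 - η * ℓ i + (η * ℓ i)^2/2) := h1
      _ = (∑ i, p i) - η * ∑ i, p i * ℓ i + η^2/2 * ∑ i, p i * ℓ i ^ 2 := by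
          rw [Finset.mul_sum, Finset.mul_sum, ← Finset.sum_sub_distrib, ← Finset.sum_add_distrib]
          apply Finset.sum_congr rfl
          intro i _; ring
      _ = 1 - η * ∑ i, p i * ℓ i + η^2/2 * ∑ i, p i * ℓ i ^ 2 := by rw [hp1]
  have hlog : Real.log S ≤ S - 1 := Real.log_le_sub_one_of_pos hS
  have h2 : Real.log S ≤ -(η * ∑ i, p i * ℓ i) + η^2/2 * ∑ i, p i * ℓ i ^ 2 := by linarith
  have h3 := mul_le_mul_of_nonneg_left h2 (le_of_lt (one_div_pos.2 hη))
  have h4 : 1/η * (-(η * ∑ i, p i * ℓ i) + η^2/2 * ∑ i, p i * ℓ i ^ 2)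
      = -(∑ i, p i * ℓ i) + η/2 * ∑ i, p i * ℓ i ^ 2 := by
    field_simp
  rw [h4] at h3
  linarith

lemma aux_tele {K : ℕ} (hK : 1 ≤ K) (η : ℕ → ℝ) (hηpos : ∀ t, 0 < η t)
    (hηmono : ∀ s t : ℕ, s ≤ t → η t ≤ η s) (Lc : ℕ → Fin K → ℝ) :
    ∀ T : ℕ, 1 ≤ T →
      ∑ t ∈ Icc 1 T, (psi K (η t) (Lc t) - psi K (η t) (Lc (t+1)))
        ≤ psi K (η 1) (Lc 1) - psi K (η T) (Lc (T+1)) := by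
  intro T
  induction T with
  | zero => intro h; omega
  | succ n ih =>
    intro _
    rcases Nat.eq_zero_or_pos n with hn | hn
    · subst hn; simp
    · have h1 : (1:ℕ) ≤ n + 1 := by omega
      rw [← Finset.Ico_add_one_right_eq_Icc, Finset.sum_Ico_succ_top h1, Finset.Ico_add_one_right_eq_Icc]
      have hmono : psi K (η (n+1)) (Lc (n+1)) ≤ psi K (η n) (Lc (n+1)) :=
        aux_psi_mono hK _ (hηpos (n+1)) (hηmono n (n+1) (by omega))
      have := ih hn
      linarith

theorem stmt_11 (K T : ℕ) (hK : 1 ≤ K) (hT : 1 ≤ T)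
    (ℓ : ℕ → Fin K → ℝ) (η : ℕ → ℝ) (p : ℕ → Fin K → ℝ)
    (hℓ0 : ∀ t i, 0 ≤ ℓ t i)
    (hηpos : ∀ t, 0 < η t)
    (hηmono : ∀ s t : ℕ, s ≤ t → η t ≤ η s)
    (hp : ∀ t ∈ Finset.Icc 1 T, ∀ i : Fin K,
        p t i = Real.exp (-η t * ∑ s ∈ Finset.Ico 1 t, ℓ s i) /
          ∑ j : Fin K, Real.exp (-η t * ∑ s ∈ Finset.Ico 1 t, ℓ s j)) :
    ∀ k : Fin K,
      (∑ t ∈ Finset.Icc 1 T, ∑ i : Fin K, p t i * ℓ t i)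
          - ∑ t ∈ Finset.Icc 1 T, ℓ t k
        ≤ Real.log K / η T
          + (1 / 2) * ∑ t ∈ Finset.Icc 1 T, η t * ∑ i : Fin K, p t i * ℓ t i ^ 2 := by
  intro k
  haveI : Nonempty (Fin K) := Fin.pos_iff_nonempty.1 hK
  have hKpos : (0:ℝ) < K := by exact_mod_cast hK
  set Lc : ℕ → Fin K → ℝ := fun t i => ∑ s ∈ Finset.Ico 1 t, ℓ s i with hLc
  set W : ℕ → ℝ := fun t => ∑ j : Fin K, Real.exp (-η t * Lc t j) with hW
  have hWpos : ∀ t, 0 < W t := fun t => Finset.sum_pos (fun j _ => Real.exp_pos _) univ_nonempty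
  -- per-round key bound
  have key : ∀ t ∈ Finset.Icc 1 T,
      ∑ i : Fin K, p t i * ℓ t i ≤ (psi K (η t) (Lc t) - psi K (η t) (Lc (t+1)))
        + (η t / 2) * ∑ i : Fin K, p t i * ℓ t i ^ 2 := by
    intro t ht
    obtain ⟨ht1, htT⟩ := Finset.mem_Icc.1 ht
    have hpt : ∀ i, p t i = Real.exp (-η t * Lc t i) / W t := hp t ht
    have hp0 : ∀ i, 0 ≤ p t i := fun i => by
      rw [hpt i]; positivity
    have hp1 : ∑ i, p t i = 1 := by
      have : ∑ i, p t i = (∑ i : Fin K, Real.exp (-η t * Lc t i)) / W t := by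
        rw [Finset.sum_div]; exact Finset.sum_congr rfl fun i _ => hpt i
      rw [this]; exact div_self (ne_of_gt (hWpos t))
    have hLsucc : ∀ i, Lc (t+1) i = Lc t i + ℓ t i := by
      intro i; simp only [hLc]; rw [Finset.sum_Ico_succ_top ht1]
    set Wp : ℝ := ∑ j : Fin K, Real.exp (-(η t * Lc (t+1) j)) with hWp
    have hWppos : 0 < Wp := Finset.sum_pos (fun j _ => Real.exp_pos _) univ_nonempty
    have hSid : ∑ i : Fin K, p t i * Real.exp (-(η t * ℓ t i)) = Wp / W t := by
      rw [hWp, Finset.sum_div]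
      refine Finset.sum_congr rfl fun i _ => ?_
      rw [hpt i, hLsucc i, div_mul_eq_mul_div, ← Real.exp_add]
      congr 1
      ring
    have hS : 0 < ∑ i : Fin K, p t i * Real.exp (-(η t * ℓ t i)) := by
      rw [hSid]; positivity
    have hWeq : ∑ i : Fin K, Real.exp (-(η t * Lc t i)) = W t := by
      simp only [hW, neg_mul]
    have hlogid : -(1/η t) * Real.log (∑ i : Fin K, p t i * Real.exp (-(η t * ℓ t i)))
        = psi K (η t) (Lc t) - psi K (η t) (Lc (t+1)) := by
      rw [hSid, Real.log_div (ne_of_gt hWppos) (ne_of_gt (hWpos t))]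
      unfold psi
      rw [hWeq]
      rw [Real.log_div (ne_of_gt (hWpos t)) (ne_of_gt hKpos),
          Real.log_div (ne_of_gt hWppos) (ne_of_gt hKpos)]
      ring
    have := aux_round hK (hηpos t) (p t) (ℓ t) hp0 hp1 (fun i => hℓ0 t i) hS
    rw [hlogid] at this
    exact this
  -- telescoping
  have tele := aux_tele hK η hηpos hηmono Lc T hT
  -- ψ at time 1 is zero
  have h0 : psi K (η 1) (Lc 1) = 0 := by
    unfold psi
    have h1 : ∀ i : Fin K, Real.exp (-(η 1 * Lc 1 i)) = 1 := by
      intro i; simp [hLc]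
    rw [Finset.sum_congr rfl fun i _ => h1 i, Finset.sum_const, Finset.card_univ]
    simp [div_self (ne_of_gt hKpos)]
  -- comparator bound
  have hfinal : -(psi K (η T) (Lc (T+1))) ≤ Lc (T+1) k + Real.log K / η T := by
    have hsingle : Real.exp (-(η T * Lc (T+1) k)) ≤ ∑ i : Fin K, Real.exp (-(η T * Lc (T+1) i)) :=
      Finset.single_le_sum (f := fun i => Real.exp (-(η T * Lc (T+1) i)))
        (fun i _ => (Real.exp_pos _).le) (Finset.mem_univ k)
    have hdiv : Real.exp (-(η T * Lc (T+1) k)) / K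
        ≤ (∑ i : Fin K, Real.exp (-(η T * Lc (T+1) i))) / K := by gcongr
    have hlog := Real.log_le_log (by positivity) hdiv
    have hmul := mul_le_mul_of_nonneg_left hlog (le_of_lt (one_div_pos.2 (hηpos T)))
    rw [Real.log_div (Real.exp_ne_zero _) (ne_of_gt hKpos), Real.log_exp] at hmul
    have heq : (1/η T) * (-(η T * Lc (T+1) k) - Real.log K)
        = -(Lc (T+1) k) - Real.log K / η T := by
      have hne : η T ≠ 0 := ne_of_gt (hηpos T)
      field_simp
    rw [heq] at hmul
    unfold psi
    linarith
  -- final assembly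
  have hsum1 : ∑ t ∈ Finset.Icc 1 T, ∑ i : Fin K, p t i * ℓ t i
      ≤ ∑ t ∈ Finset.Icc 1 T, (psi K (η t) (Lc t) - psi K (η t) (Lc (t+1)))
        + ∑ t ∈ Finset.Icc 1 T, (η t / 2) * ∑ i : Fin K, p t i * ℓ t i ^ 2 := by
    rw [← Finset.sum_add_distrib]
    exact Finset.sum_le_sum key
  have hhalf : ∑ t ∈ Finset.Icc 1 T, (η t / 2) * ∑ i : Fin K, p t i * ℓ t i ^ 2
      = (1/2) * ∑ t ∈ Finset.Icc 1 T, η t * ∑ i : Fin K, p t i * ℓ t i ^ 2 := by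
    rw [Finset.mul_sum]
    exact Finset.sum_congr rfl fun t _ => by ring
  have hcomp : ∑ t ∈ Finset.Icc 1 T, ℓ t k = Lc (T+1) k := by
    simp only [hLc]
    rw [Finset.Ico_add_one_right_eq_Icc]
  linarith
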